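/- Let P and Q be probability distributions with strictly positive entries. Then M_SA(P‖Q) ≤ (1/3)·M_SH(P‖Q) ≤ (1/4)·Δ(P‖Q) ≤ (1/2)·M_SG(P‖Q) ≤ h(P‖Q), where M_SA(P‖Q) = Σᵢ √((pᵢ²+qᵢ²)/2) − 1, M_SH(P‖Q) = Σᵢ (√((pᵢ²+qᵢ²)/2) − 2pᵢqᵢ/(pᵢ+qᵢ)), Δ(P‖Q) = Σᵢ (pᵢ−qᵢ)²/(pᵢ+qᵢ), M_SG(P‖Q) = Σᵢ (√((pᵢ²+qᵢ²)/2) − √(pᵢqᵢ)), and h(P‖Q) = (1/2)Σᵢ (√pᵢ−√qᵢ)². -/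

import Mathlib

private lemma aux_sq (p q : ℝ) (hp : 0 < p) (hq : 0 < q) :
    (Real.sqrt ((p ^ 2 + q ^ 2) / 2)) ^ 2 = (p ^ 2 + q ^ 2) / 2 :=
  Real.sq_sqrt (by positivity)

private lemma aux_key (p q : ℝ) (hp : 0 < p) (hq : 0 < q) :
    Real.sqrt ((p ^ 2 + q ^ 2) / 2) ≤ 3 * (p + q) / 4 - p * q / (p + q) := by
  have ha : 0 < p + q := by linarith
  rw [Real.sqrt_le_iff]
  have h : 3 * (p + q) / 4 - p * q / (p + q) = (3 * (p + q) ^ 2 - 4 * (p * q)) / (4 * (p + q)) := by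
    field_simp
  constructor
  · rw [h]
    apply div_nonneg _ (by positivity)
    nlinarith [sq_nonneg (p - q)]
  · rw [h, div_pow, le_div_iff₀ (by positivity)]
    nlinarith [sq_nonneg ((p + q) ^ 2 - 4 * p * q)]

private lemma aux1 (p q : ℝ) (hp : 0 < p) (hq : 0 < q) :
    Real.sqrt ((p ^ 2 + q ^ 2) / 2) - (p + q) / 2 ≤
      (1 / 3) * (Real.sqrt ((p ^ 2 + q ^ 2) / 2) - 2 * p * q / (p + q)) := by
  have ha : 0 < p + q := by linarith
  have key := aux_key p q hp hq
  have h2 : 2 * p * q / (p + q) = 2 * (p * q / (p + q)) := by ring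
  linarith

private lemma aux2 (p q : ℝ) (hp : 0 < p) (hq : 0 < q) :
    (1 / 3) * (Real.sqrt ((p ^ 2 + q ^ 2) / 2) - 2 * p * q / (p + q)) ≤
      (1 / 4) * ((p - q) ^ 2 / (p + q)) := by
  have ha : 0 < p + q := by linarith
  have key := aux_key p q hp hq
  have h2 : 2 * p * q / (p + q) = 2 * (p * q / (p + q)) := by ring
  have h3 : (p - q) ^ 2 / (p + q) = (p + q) - 4 * (p * q / (p + q)) := by
    field_simp; ring
  linarith

private lemma aux3 (p q : ℝ) (hp : 0 < p) (hq : 0 < q) :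
    (1 / 4) * ((p - q) ^ 2 / (p + q)) ≤
      (1 / 2) * (Real.sqrt ((p ^ 2 + q ^ 2) / 2) - Real.sqrt (p * q)) := by
  have ha : 0 < p + q := by linarith
  have hg0 : 0 ≤ Real.sqrt (p * q) := Real.sqrt_nonneg _
  have hg2 : (Real.sqrt (p * q)) ^ 2 = p * q := Real.sq_sqrt (by positivity)
  set g := Real.sqrt (p * q)
  set d := (p - q) ^ 2 / (2 * (p + q)) with hddef
  have hd0 : 0 ≤ d := by positivity
  have hd : d * (2 * (p + q)) = (p - q) ^ 2 := div_mul_cancel₀ _ (by positivity)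
  have key : g + d ≤ Real.sqrt ((p ^ 2 + q ^ 2) / 2) := by
    rw [Real.le_sqrt (by positivity) (by positivity)]
    nlinarith [mul_nonneg hd0 (sq_nonneg (p + q - 2 * g)), sq_nonneg (p + q - 2 * g),
      mul_nonneg hd0 hd0, mul_nonneg hd0 hg0]
  have h4 : d = (1/2) * ((p - q) ^ 2 / (p + q)) := by
    rw [hddef]; field_simp
  linarith

private lemma aux4 (p q : ℝ) (hp : 0 < p) (hq : 0 < q) :
    (1 / 2) * (Real.sqrt ((p ^ 2 + q ^ 2) / 2) - Real.sqrt (p * q)) ≤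
      (1 / 2) * (Real.sqrt p - Real.sqrt q) ^ 2 := by
  have hg0 : 0 ≤ Real.sqrt (p * q) := Real.sqrt_nonneg _
  have hg2 : (Real.sqrt (p * q)) ^ 2 = p * q := Real.sq_sqrt (by positivity)
  set g := Real.sqrt (p * q) with hgdef
  have hsp : (Real.sqrt p) ^ 2 = p := Real.sq_sqrt hp.le
  have hsq : (Real.sqrt q) ^ 2 = q := Real.sq_sqrt hq.le
  have hmul : Real.sqrt p * Real.sqrt q = g := (Real.sqrt_mul hp.le q).symm
  have he : (Real.sqrt p - Real.sqrt q) ^ 2 = p + q - 2 * g := by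
    have : (Real.sqrt p - Real.sqrt q) ^ 2 =
        (Real.sqrt p) ^ 2 + (Real.sqrt q) ^ 2 - 2 * (Real.sqrt p * Real.sqrt q) := by ring
    rw [this, hsp, hsq, hmul]
  have hgle : g ≤ (p + q) / 2 := by nlinarith [sq_nonneg (p - q)]
  have key : Real.sqrt ((p ^ 2 + q ^ 2) / 2) ≤ p + q - g := by
    rw [Real.sqrt_le_iff]
    exact ⟨by linarith, by nlinarith [sq_nonneg (p + q - 2 * g)]⟩
  rw [he]; linarith

theorem mean_divergence_chain (n : ℕ) (p q : Fin n → ℝ)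
    (hp : ∀ i, 0 < p i) (hq : ∀ i, 0 < q i)
    (hp1 : ∑ i, p i = 1) (hq1 : ∑ i, q i = 1) :
    (∑ i, Real.sqrt ((p i ^ 2 + q i ^ 2) / 2)) - 1 ≤
      (1 / 3) * ∑ i, (Real.sqrt ((p i ^ 2 + q i ^ 2) / 2) - 2 * p i * q i / (p i + q i)) ∧
    (1 / 3) * (∑ i, (Real.sqrt ((p i ^ 2 + q i ^ 2) / 2) - 2 * p i * q i / (p i + q i))) ≤
      (1 / 4) * ∑ i, (p i - q i) ^ 2 / (p i + q i) ∧
    (1 / 4) * (∑ i, (p i - q i) ^ 2 / (p i + q i)) ≤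
      (1 / 2) * ∑ i, (Real.sqrt ((p i ^ 2 + q i ^ 2) / 2) - Real.sqrt (p i * q i)) ∧
    (1 / 2) * (∑ i, (Real.sqrt ((p i ^ 2 + q i ^ 2) / 2) - Real.sqrt (p i * q i))) ≤
      (1 / 2) * ∑ i, (Real.sqrt (p i) - Real.sqrt (q i)) ^ 2 := by
  refine ⟨?_, ?_, ?_, ?_⟩
  · have hsum : ∑ i, (p i + q i) / 2 = 1 := by
      rw [← Finset.sum_div, Finset.sum_add_distrib, hp1, hq1]; norm_num
    calc (∑ i, Real.sqrt ((p i ^ 2 + q i ^ 2) / 2)) - 1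
        = ∑ i, (Real.sqrt ((p i ^ 2 + q i ^ 2) / 2) - (p i + q i) / 2) := by
          rw [Finset.sum_sub_distrib, hsum]
      _ ≤ ∑ i, (1 / 3) * (Real.sqrt ((p i ^ 2 + q i ^ 2) / 2) - 2 * p i * q i / (p i + q i)) :=
          Finset.sum_le_sum fun i _ => aux1 (p i) (q i) (hp i) (hq i)
      _ = (1 / 3) * ∑ i, (Real.sqrt ((p i ^ 2 + q i ^ 2) / 2) - 2 * p i * q i / (p i + q i)) := by
          rw [Finset.mul_sum]
  · rw [Finset.mul_sum, Finset.mul_sum]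
    exact Finset.sum_le_sum fun i _ => aux2 (p i) (q i) (hp i) (hq i)
  · rw [Finset.mul_sum, Finset.mul_sum]
    exact Finset.sum_le_sum fun i _ => aux3 (p i) (q i) (hp i) (hq i)
  · rw [Finset.mul_sum, Finset.mul_sum]
    exact Finset.sum_le_sum fun i _ => aux4 (p i) (q i) (hp i) (hq i)
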